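/- arXiv:2006.15708 — 2 statements merged into one kernel-verified Lean document; each statement's English description precedes it below -/
import Mathlib

section
/- Let (s, l, α♯, n) be a null foliation adapted frame for a null foliation ℱ of a spacetime (M,g). Then ds♭(l,s) = g(∇_s l, s) and dα(l, α♯) = g(∇_{α♯} l, α♯); consequently dα(l, α♯) = ds♭(l, s) holds if and only if ℱ admits an equipartition of null mean curvature with respect to l, i.e., θ = g(∇_s l, s), where θ = ½[g(∇_s l, s) + g(∇_{α♯} l, α♯)] is the null expansion scalar. -/
noncomputable section

namespace FFE

/-- Points of the chart domain `U_p ⊆ M` of a spacetime, in coordinates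
`(x¹,…,x⁴)` (indexed here by `0,…,3`, so `x³ ↦ 2` and `x⁴ ↦ 3`). -/
abbrev Pt : Type := Fin 4 → ℝ

/-- Scalar fields. -/
abbrev Sc : Type := Pt → ℝ

/-- Vector fields, given by their chart components. -/
abbrev Vec : Type := Fin 4 → Sc

/-- Covector fields (1-forms), given by their chart components. -/
abbrev Cov : Type := Fin 4 → Sc

/-- 2-forms, given by their (antisymmetric) chart components. -/
abbrev Form2 : Type := Fin 4 → Fin 4 → Sc

/-- Partial derivative along the `i`-th coordinate. -/
def pd (i : Fin 4) (f : Sc) : Sc := fun p => fderiv ℝ f p (Pi.single i 1)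

/-- Smoothness of a scalar field. -/
def Smooth (f : Sc) : Prop := ContDiff ℝ (⊤ : ℕ∞) f

/-- Directional derivative of a scalar field along a vector field. -/
def act (v : Vec) (f : Sc) : Sc := ∑ i, v i * pd i f

/-- Lie bracket of vector fields. -/
def bracket (v w : Vec) : Vec := fun μ => act v (w μ) - act w (v μ)

/-- Exterior derivative of a 1-form, evaluated on two vector fields:
`dω(v,w) = (∂_μ ω_ν − ∂_ν ω_μ) v^μ w^ν`. -/
def dOne (ω : Cov) (v w : Vec) : Sc :=
  ∑ μ, ∑ ν, (pd μ (ω ν) - pd ν (ω μ)) * v μ * w ν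

/-- `log |f|`. -/
def logabs (f : Sc) : Sc := fun p => Real.log |f p|

/-- A (smooth) Lorentzian metric of signature `(-1,1,1,1)`, given in a chart by its
covariant components `gdown`, contravariant components `ginv`, and volume factor
`vol = √(−det g)`. -/
structure Lorentzian where
  gdown : Fin 4 → Fin 4 → Sc
  ginv : Fin 4 → Fin 4 → Sc
  vol : Sc
  smooth_gdown : ∀ μ ν, Smooth (gdown μ ν)
  smooth_ginv : ∀ μ ν, Smooth (ginv μ ν)
  smooth_vol : Smooth vol
  symm_gdown : ∀ μ ν, gdown μ ν = gdown ν μ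
  symm_ginv : ∀ μ ν, ginv μ ν = ginv ν μ
  inv_gdown : ∀ μ ν p, (∑ ρ, ginv μ ρ p * gdown ρ ν p) = if μ = ν then 1 else 0
  vol_pos : ∀ p, 0 < vol p
  vol_sq : ∀ p, vol p ^ 2 = -Matrix.det (Matrix.of fun μ ν => gdown μ ν p)
  signature : ∀ p, ∃ e : Fin 4 → Fin 4 → ℝ, ∀ i j,
    (∑ μ, ∑ ν, gdown μ ν p * e i μ * e j ν) =
      if i = j then (if i = 0 then -1 else 1) else 0

namespace Lorentzian

variable (g : Lorentzian)

/-- Lowering an index: `v ↦ v♭`. -/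
def flat (v : Vec) : Cov := fun μ => ∑ ν, g.gdown μ ν * v ν

/-- Raising an index: `ω ↦ ω♯`. -/
def sharp (ω : Cov) : Vec := fun μ => ∑ ν, g.ginv μ ν * ω ν

/-- Metric pairing `g(v,w)` of vector fields. -/
def inner (v w : Vec) : Sc := ∑ μ, ∑ ν, g.gdown μ ν * v μ * w ν

/-- Christoffel symbols of the Levi-Civita connection. -/
def christoffel (μ ν ρ : Fin 4) : Sc := fun p =>
  (1 / 2) * ∑ σ, g.ginv μ σ p *
    (pd ν (g.gdown σ ρ) p + pd ρ (g.gdown σ ν) p - pd σ (g.gdown ν ρ) p)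

/-- Covariant derivative `∇_v w` of the Levi-Civita connection. -/
def nabla (v w : Vec) : Vec := fun μ =>
  (∑ ν, v ν * pd ν (w μ)) + ∑ ν, ∑ ρ, g.christoffel μ ν ρ * v ν * w ρ

/-- Divergence `∇_μ X^μ = (1/√(−g)) ∂_μ (√(−g) X^μ)`. -/
def div (v : Vec) : Sc := fun p =>
  (g.vol p)⁻¹ * ∑ μ, pd μ (fun q => g.vol q * v μ q) p

/-- Raising both indices of a 2-form. -/
def up2 (F : Form2) : Form2 := fun μ ν => ∑ ρ, ∑ σ, g.ginv μ ρ * g.ginv ν σ * F ρ σ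

/-- The full contraction `F_{μν} F^{μν}`. -/
def contract2 (F : Form2) : Sc := ∑ μ, ∑ ν, F μ ν * g.up2 F μ ν

/-- The current density vector `j = *(d*F)`, in components
`j^μ = (1/√(−g)) ∂_ν (√(−g) F^{μν})`. -/
def current (F : Form2) : Vec := fun μ => fun p =>
  (g.vol p)⁻¹ * ∑ ν, pd ν (fun q => g.vol q * g.up2 F μ ν q) p

/-- `F` is a null 2-form: `F_{μν}F^{μν} = 0`. -/
def IsNull (F : Form2) : Prop := g.contract2 F = 0

/-- The force-free condition `i_{j♯} F = 0` for the current `j` of `F`. -/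
def ForceFree (F : Form2) : Prop := ∀ ν, (∑ μ, F μ ν * g.current F μ) = 0

end Lorentzian

/-- `dF = 0` for a 2-form. -/
def Closed (F : Form2) : Prop :=
  ∀ μ ν ρ, pd μ (F ν ρ) + pd ν (F ρ μ) + pd ρ (F μ ν) = 0

/-- The Levi-Civita alternating symbol. -/
def eps (μ ν ρ σ : Fin 4) : ℝ :=
  Matrix.det (Matrix.of fun i j => if (![μ, ν, ρ, σ] i) = j then (1 : ℝ) else 0)

/-- Hodge star of a 2-form: `(*F)_{μν} = ½ √(−g) ε_{μνρσ} F^{ρσ}`. -/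
def Lorentzian.hodge2 (g : Lorentzian) (F : Form2) : Form2 := fun μ ν => fun p =>
  (1 / 2) * g.vol p * ∑ ρ, ∑ σ, eps μ ν ρ σ * g.up2 F ρ σ p

/-- Exterior derivative of a 2-form (components of the 3-form `dG`). -/
def dTwo (G : Form2) : Fin 4 → Fin 4 → Fin 4 → Sc := fun μ ν ρ =>
  pd μ (G ν ρ) + pd ν (G ρ μ) + pd ρ (G μ ν)

/-- The (scalar density representing the) wedge product of a 3-form with a 1-form. -/
def wedge31 (J : Fin 4 → Fin 4 → Fin 4 → Sc) (ω : Cov) : Sc := fun p =>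
  ∑ μ, ∑ ν, ∑ ρ, ∑ σ, eps μ ν ρ σ * J μ ν ρ p * ω σ p

/-- The chart is adapted to a *null* foliation: on the leaves (the level sets of
`(x³,x⁴)`) the metric is degenerate, i.e. `g³³g⁴⁴ − (g³⁴)² = 0`. -/
def Lorentzian.NullAdapted (g : Lorentzian) : Prop :=
  ∀ p, g.ginv 2 2 p * g.ginv 3 3 p - (g.ginv 2 3 p) ^ 2 = 0

/-- `M^r = g^{r3} g^{34} − g^{33} g^{r4}` (coordinates `x³,x⁴` are indices `2,3`). -/
def Mvec (g : Lorentzian) : Vec := fun r =>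
  g.ginv r 2 * g.ginv 2 3 - g.ginv 2 2 * g.ginv r 3

/-- `N^r = g^{r3} g^{44} − g^{34} g^{r4}`. -/
def Nvec (g : Lorentzian) : Vec := fun r =>
  g.ginv r 2 * g.ginv 3 3 - g.ginv 2 3 * g.ginv r 3

/-- A null foliation adapted frame `(s, l, α♯, n)`: `l, n` null, `s, α♯` unit
spacelike, `g(n,l) = −1`, all other frame inner products zero, spanning `TM`. -/
structure Frame (g : Lorentzian) (s l a n : Vec) : Prop where
  smooth_s : ∀ μ, Smooth (s μ)
  smooth_l : ∀ μ, Smooth (l μ)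
  smooth_a : ∀ μ, Smooth (a μ)
  smooth_n : ∀ μ, Smooth (n μ)
  l_null : g.inner l l = 0
  n_null : g.inner n n = 0
  s_unit : g.inner s s = 1
  a_unit : g.inner a a = 1
  n_l : g.inner n l = -1
  n_s : g.inner n s = 0
  n_a : g.inner n a = 0
  l_s : g.inner l s = 0
  l_a : g.inner l a = 0
  s_a : g.inner s a = 0
  spans : ∀ (p : Pt) (v : Fin 4 → ℝ), ∃ c : Fin 4 → ℝ,
    ∀ μ, v μ = c 0 * s μ p + c 1 * l μ p + c 2 * a μ p + c 3 * n μ p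

/-- `l` is a pregeodesic vector field: `∇_l l` is everywhere proportional to `l`. -/
def Pregeodesic (g : Lorentzian) (l : Vec) : Prop :=
  ∃ f : Sc, g.nabla l l = fun μ => f * l μ

/-- The null expansion scalar `θ = ½[g(∇_s l, s) + g(∇_{α♯} l, α♯)]`. -/
def theta (g : Lorentzian) (l s a : Vec) : Sc :=
  (1 / 2 : Sc) * (g.inner (g.nabla s l) s + g.inner (g.nabla a l) a)

/-- The foliation admits an equipartition of null mean curvature w.r.t. `l`:
`θ = g(∇_s l, s)`. -/
def Equipartition (g : Lorentzian) (l s a : Vec) : Prop :=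
  theta g l s a = g.inner (g.nabla s l) s

/-- `l` admits a uniform equipartition of null mean curvature:
`g(∇_s l, α♯) + g(∇_{α♯} l, s) = 0`. -/
def UniformEquipartition (g : Lorentzian) (l s a : Vec) : Prop :=
  g.inner (g.nabla s l) a + g.inner (g.nabla a l) s = 0

/-- `v` lies in the kernel of the 2-form `F`. -/
def InKernel (F : Form2) (v : Vec) : Prop := ∀ μ, (∑ ν, F μ ν * v ν) = 0

/-- The kernel of `F` consists at each point exactly of the vectors tangent to the
leaves of the adapted chart (those with vanishing `x³`- and `x⁴`-components). -/
def KernelExact (F : Form2) : Prop :=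
  ∀ (p : Pt) (v : Fin 4 → ℝ),
    (∀ μ, (∑ ν, F μ ν p * v ν) = 0) ↔ (v 2 = 0 ∧ v 3 = 0)

/-- The kernel of `F` is at each point exactly the span of `v` and `w`. -/
def KernelSpan (F : Form2) (v w : Vec) : Prop :=
  ∀ (p : Pt) (x : Fin 4 → ℝ),
    (∀ μ, (∑ ν, F μ ν p * x ν) = 0) ↔ ∃ c d : ℝ, ∀ μ, x μ = c * v μ p + d * w μ p

/-- `u` is a function of `(x³,x⁴)` alone (constant along the leaves). -/
def LeafConstant (u : Sc) : Prop := pd 0 u = 0 ∧ pd 1 u = 0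

/-- The 2-form `F = u dx³ ∧ dx⁴`. -/
def chartF (u : Sc) : Form2 := fun μ ν =>
  u * ((if μ = 2 ∧ ν = 3 then (1 : Sc) else 0) - if μ = 3 ∧ ν = 2 then (1 : Sc) else 0)

/-- The transition factor `κ = (α₃ l♭₄ − α₄ l♭₃)⁻¹`. -/
def kappa (g : Lorentzian) (a l : Vec) : Sc :=
  (g.flat a 2 * g.flat l 3 - g.flat a 3 * g.flat l 2)⁻¹

/-- The 2-form `F = (u·κ) α ∧ l♭` (with `α = a♭`). -/
def frameF (g : Lorentzian) (a l : Vec) (u : Sc) : Form2 := fun μ ν =>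
  u * kappa g a l * (g.flat a μ * g.flat l ν - g.flat a ν * g.flat l μ)

end FFE

namespace FFE

lemma smooth_diffAt {f : Sc} (hf : Smooth f) (p : Pt) : DifferentiableAt ℝ f p :=
  (hf.differentiable (by simp)) p

lemma Smooth.mul' {f g : Sc} (hf : Smooth f) (hg : Smooth g) : Smooth (f * g) := hf.mul hg

lemma pd_mul_apply {f g : Sc} (hf : Smooth f) (hg : Smooth g) (i : Fin 4) (p : Pt) :
    pd i (f * g) p = pd i f p * g p + f p * pd i g p := by
  have h := fderiv_fun_mul (smooth_diffAt hf p) (smooth_diffAt hg p)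
  simp only [pd, show (f * g) = fun q => f q * g q from rfl, h,
    ContinuousLinearMap.add_apply, ContinuousLinearMap.smul_apply, smul_eq_mul]
  ring

lemma pd_sum_apply' {m : Type*} (u : Finset m) (F : m → Sc) (hF : ∀ j ∈ u, Smooth (F j))
    (i : Fin 4) (p : Pt) :
    pd i (fun q => ∑ j ∈ u, F j q) p = ∑ j ∈ u, pd i (F j) p := by
  simp only [pd]
  rw [fderiv_fun_sum fun j hj => smooth_diffAt (hF j hj) p]
  simp

lemma pd_sum_apply {m : Type*} (u : Finset m) (F : m → Sc) (hF : ∀ j ∈ u, Smooth (F j))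
    (i : Fin 4) (p : Pt) :
    pd i (∑ j ∈ u, F j) p = ∑ j ∈ u, pd i (F j) p := by
  rw [show (∑ j ∈ u, F j) = fun q => ∑ j ∈ u, F j q by funext q; simp]
  exact pd_sum_apply' u F hF i p

lemma smooth_sum {m : Type*} (u : Finset m) (F : m → Sc) (hF : ∀ j ∈ u, Smooth (F j)) :
    Smooth (∑ j ∈ u, F j) := by
  rw [show (∑ j ∈ u, F j) = fun q => ∑ j ∈ u, F j q by funext q; simp]
  exact ContDiff.sum fun j hj => hF j hj

lemma pd_one_apply (i : Fin 4) (p : Pt) : pd i (1 : Sc) p = 0 := by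
  simp only [pd, show (1 : Sc) = fun _ => (1:ℝ) from rfl, fderiv_const]
  simp

lemma pd_zero_apply (i : Fin 4) (p : Pt) : pd i (0 : Sc) p = 0 := by
  simp only [pd, show (0 : Sc) = fun _ => (0:ℝ) from rfl, fderiv_const]
  simp

end FFE
namespace FFE

lemma inner_symm (g : Lorentzian) (x y : Vec) : g.inner x y = g.inner y x := by
  funext p
  simp only [Lorentzian.inner, Finset.sum_apply, Pi.mul_apply, Pi.add_apply, Fin.sum_univ_four,
    g.symm_gdown 1 0, g.symm_gdown 2 0, g.symm_gdown 2 1, g.symm_gdown 3 0,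
    g.symm_gdown 3 1, g.symm_gdown 3 2]
  ring

lemma gg (g : Lorentzian) (p : Pt) (τ σ : Fin 4) :
    (∑ μ, g.gdown τ μ p * g.ginv μ σ p) = if τ = σ then 1 else 0 := by
  have h := g.inv_gdown σ τ p
  rw [show (if τ = σ then (1:ℝ) else 0) = if σ = τ then 1 else 0 by
    by_cases hc : τ = σ <;> simp [hc, Ne.symm, eq_comm]]
  rw [← h]
  exact Finset.sum_congr rfl fun μ _ => by rw [g.symm_gdown τ μ, g.symm_ginv μ σ]; ring

lemma pd_inner (g : Lorentzian) {w w' : Vec} (hw : ∀ μ, Smooth (w μ)) (hw' : ∀ μ, Smooth (w' μ))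
    (i : Fin 4) (p : Pt) :
    pd i (g.inner w w') p =
      ∑ μ, ∑ ν, (pd i (g.gdown μ ν) p * w μ p * w' ν p
        + g.gdown μ ν p * pd i (w μ) p * w' ν p
        + g.gdown μ ν p * w μ p * pd i (w' ν) p) := by
  rw [Lorentzian.inner]
  rw [pd_sum_apply Finset.univ _
    (fun μ _ => smooth_sum _ _ fun ν _ => ((g.smooth_gdown μ ν).mul' (hw μ)).mul' (hw' ν)) i p]
  refine Finset.sum_congr rfl fun μ _ => ?_
  rw [pd_sum_apply Finset.univ _ (fun ν _ => ((g.smooth_gdown μ ν).mul' (hw μ)).mul' (hw' ν)) i p]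
  refine Finset.sum_congr rfl fun ν _ => ?_
  rw [pd_mul_apply ((g.smooth_gdown μ ν).mul' (hw μ)) (hw' ν),
    pd_mul_apply (g.smooth_gdown μ ν) (hw μ)]
  simp only [Pi.mul_apply]
  ring

lemma pd_flat (g : Lorentzian) {x : Vec} (hx : ∀ μ, Smooth (x μ)) (i ν : Fin 4) (p : Pt) :
    pd i (g.flat x ν) p =
      ∑ ρ, (pd i (g.gdown ν ρ) p * x ρ p + g.gdown ν ρ p * pd i (x ρ) p) := by
  rw [show g.flat x ν = ∑ ρ, g.gdown ν ρ * x ρ from rfl]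
  rw [pd_sum_apply Finset.univ _ (fun ρ _ => (g.smooth_gdown ν ρ).mul' (hx ρ)) i p]
  refine Finset.sum_congr rfl fun ρ _ => ?_
  rw [pd_mul_apply (g.smooth_gdown ν ρ) (hx ρ)]

end FFE
namespace FFE

lemma lowered (g : Lorentzian) (p : Pt) (τ ν ρ : Fin 4) :
    ∑ μ, g.gdown τ μ p * g.christoffel μ ν ρ p
      = (1/2) * (pd ν (g.gdown τ ρ) p + pd ρ (g.gdown τ ν) p - pd τ (g.gdown ν ρ) p) := by
  calc ∑ μ, g.gdown τ μ p * g.christoffel μ ν ρ p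
      = ∑ μ, ∑ σ, (g.gdown τ μ p * g.ginv μ σ p) *
          ((1/2) * (pd ν (g.gdown σ ρ) p + pd ρ (g.gdown σ ν) p - pd σ (g.gdown ν ρ) p)) := by
        refine Finset.sum_congr rfl fun μ _ => ?_
        simp only [Lorentzian.christoffel, Finset.mul_sum]
        exact Finset.sum_congr rfl fun σ _ => by ring
    _ = ∑ σ, (∑ μ, g.gdown τ μ p * g.ginv μ σ p) *
          ((1/2) * (pd ν (g.gdown σ ρ) p + pd ρ (g.gdown σ ν) p - pd σ (g.gdown ν ρ) p)) := by
        rw [Finset.sum_comm]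
        exact Finset.sum_congr rfl fun σ _ => (Finset.sum_mul _ _ _).symm
    _ = ∑ σ, (if τ = σ then (1:ℝ) else 0) *
          ((1/2) * (pd ν (g.gdown σ ρ) p + pd ρ (g.gdown σ ν) p - pd σ (g.gdown ν ρ) p)) :=
        Finset.sum_congr rfl fun σ _ => by rw [gg]
    _ = _ := by simp

end FFE
namespace FFE

set_option maxHeartbeats 4000000 in
lemma compat (g : Lorentzian) (v : Vec) {w w' : Vec} (hw : ∀ μ, Smooth (w μ))
    (hw' : ∀ μ, Smooth (w' μ)) (p : Pt) :
    act v (g.inner w w') p = g.inner (g.nabla v w) w' p + g.inner w (g.nabla v w') p := by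
  have e : act v (g.inner w w') p = ∑ i, v i p * pd i (g.inner w w') p := by
    simp [act, Finset.sum_apply]
  rw [e]
  simp only [pd_inner g hw hw']
  simp only [Lorentzian.inner, Lorentzian.nabla, Finset.sum_apply, Pi.mul_apply, Pi.add_apply]
  have h000 := lowered g p 0 0 0
  have h001 := lowered g p 0 0 1
  have h002 := lowered g p 0 0 2
  have h003 := lowered g p 0 0 3
  have h010 := lowered g p 0 1 0
  have h011 := lowered g p 0 1 1
  have h012 := lowered g p 0 1 2
  have h013 := lowered g p 0 1 3
  have h020 := lowered g p 0 2 0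
  have h021 := lowered g p 0 2 1
  have h022 := lowered g p 0 2 2
  have h023 := lowered g p 0 2 3
  have h030 := lowered g p 0 3 0
  have h031 := lowered g p 0 3 1
  have h032 := lowered g p 0 3 2
  have h033 := lowered g p 0 3 3
  have h100 := lowered g p 1 0 0
  have h101 := lowered g p 1 0 1
  have h102 := lowered g p 1 0 2
  have h103 := lowered g p 1 0 3
  have h110 := lowered g p 1 1 0
  have h111 := lowered g p 1 1 1
  have h112 := lowered g p 1 1 2
  have h113 := lowered g p 1 1 3
  have h120 := lowered g p 1 2 0
  have h121 := lowered g p 1 2 1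
  have h122 := lowered g p 1 2 2
  have h123 := lowered g p 1 2 3
  have h130 := lowered g p 1 3 0
  have h131 := lowered g p 1 3 1
  have h132 := lowered g p 1 3 2
  have h133 := lowered g p 1 3 3
  have h200 := lowered g p 2 0 0
  have h201 := lowered g p 2 0 1
  have h202 := lowered g p 2 0 2
  have h203 := lowered g p 2 0 3
  have h210 := lowered g p 2 1 0
  have h211 := lowered g p 2 1 1
  have h212 := lowered g p 2 1 2
  have h213 := lowered g p 2 1 3
  have h220 := lowered g p 2 2 0
  have h221 := lowered g p 2 2 1
  have h222 := lowered g p 2 2 2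
  have h223 := lowered g p 2 2 3
  have h230 := lowered g p 2 3 0
  have h231 := lowered g p 2 3 1
  have h232 := lowered g p 2 3 2
  have h233 := lowered g p 2 3 3
  have h300 := lowered g p 3 0 0
  have h301 := lowered g p 3 0 1
  have h302 := lowered g p 3 0 2
  have h303 := lowered g p 3 0 3
  have h310 := lowered g p 3 1 0
  have h311 := lowered g p 3 1 1
  have h312 := lowered g p 3 1 2
  have h313 := lowered g p 3 1 3
  have h320 := lowered g p 3 2 0
  have h321 := lowered g p 3 2 1
  have h322 := lowered g p 3 2 2
  have h323 := lowered g p 3 2 3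
  have h330 := lowered g p 3 3 0
  have h331 := lowered g p 3 3 1
  have h332 := lowered g p 3 3 2
  have h333 := lowered g p 3 3 3
  simp only [Fin.sum_univ_four, g.symm_gdown 1 0, g.symm_gdown 2 0, g.symm_gdown 2 1,
    g.symm_gdown 3 0, g.symm_gdown 3 1, g.symm_gdown 3 2] at h000 h001 h002 h003 h010 h011 h012 h013 h020 h021 h022 h023 h030 h031 h032 h033 h100 h101 h102 h103 h110 h111 h112 h113 h120 h121 h122 h123 h130 h131 h132 h133 h200 h201 h202 h203 h210 h211 h212 h213 h220 h221 h222 h223 h230 h231 h232 h233 h300 h301 h302 h303 h310 h311 h312 h313 h320 h321 h322 h323 h330 h331 h332 h333 ⊢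
  linear_combination (-(v 0 p * w 0 p * w' 0 p) - w 0 p * v 0 p * w' 0 p) * h000 +
    (-(v 0 p * w 1 p * w' 0 p) - w 0 p * v 0 p * w' 1 p) * h001 +
    (-(v 0 p * w 2 p * w' 0 p) - w 0 p * v 0 p * w' 2 p) * h002 +
    (-(v 0 p * w 3 p * w' 0 p) - w 0 p * v 0 p * w' 3 p) * h003 +
    (-(v 1 p * w 0 p * w' 0 p) - w 0 p * v 1 p * w' 0 p) * h010 +
    (-(v 1 p * w 1 p * w' 0 p) - w 0 p * v 1 p * w' 1 p) * h011 +
    (-(v 1 p * w 2 p * w' 0 p) - w 0 p * v 1 p * w' 2 p) * h012 +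
    (-(v 1 p * w 3 p * w' 0 p) - w 0 p * v 1 p * w' 3 p) * h013 +
    (-(v 2 p * w 0 p * w' 0 p) - w 0 p * v 2 p * w' 0 p) * h020 +
    (-(v 2 p * w 1 p * w' 0 p) - w 0 p * v 2 p * w' 1 p) * h021 +
    (-(v 2 p * w 2 p * w' 0 p) - w 0 p * v 2 p * w' 2 p) * h022 +
    (-(v 2 p * w 3 p * w' 0 p) - w 0 p * v 2 p * w' 3 p) * h023 +
    (-(v 3 p * w 0 p * w' 0 p) - w 0 p * v 3 p * w' 0 p) * h030 +
    (-(v 3 p * w 1 p * w' 0 p) - w 0 p * v 3 p * w' 1 p) * h031 +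
    (-(v 3 p * w 2 p * w' 0 p) - w 0 p * v 3 p * w' 2 p) * h032 +
    (-(v 3 p * w 3 p * w' 0 p) - w 0 p * v 3 p * w' 3 p) * h033 +
    (-(v 0 p * w 0 p * w' 1 p) - w 1 p * v 0 p * w' 0 p) * h100 +
    (-(v 0 p * w 1 p * w' 1 p) - w 1 p * v 0 p * w' 1 p) * h101 +
    (-(v 0 p * w 2 p * w' 1 p) - w 1 p * v 0 p * w' 2 p) * h102 +
    (-(v 0 p * w 3 p * w' 1 p) - w 1 p * v 0 p * w' 3 p) * h103 +
    (-(v 1 p * w 0 p * w' 1 p) - w 1 p * v 1 p * w' 0 p) * h110 +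
    (-(v 1 p * w 1 p * w' 1 p) - w 1 p * v 1 p * w' 1 p) * h111 +
    (-(v 1 p * w 2 p * w' 1 p) - w 1 p * v 1 p * w' 2 p) * h112 +
    (-(v 1 p * w 3 p * w' 1 p) - w 1 p * v 1 p * w' 3 p) * h113 +
    (-(v 2 p * w 0 p * w' 1 p) - w 1 p * v 2 p * w' 0 p) * h120 +
    (-(v 2 p * w 1 p * w' 1 p) - w 1 p * v 2 p * w' 1 p) * h121 +
    (-(v 2 p * w 2 p * w' 1 p) - w 1 p * v 2 p * w' 2 p) * h122 +
    (-(v 2 p * w 3 p * w' 1 p) - w 1 p * v 2 p * w' 3 p) * h123 +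
    (-(v 3 p * w 0 p * w' 1 p) - w 1 p * v 3 p * w' 0 p) * h130 +
    (-(v 3 p * w 1 p * w' 1 p) - w 1 p * v 3 p * w' 1 p) * h131 +
    (-(v 3 p * w 2 p * w' 1 p) - w 1 p * v 3 p * w' 2 p) * h132 +
    (-(v 3 p * w 3 p * w' 1 p) - w 1 p * v 3 p * w' 3 p) * h133 +
    (-(v 0 p * w 0 p * w' 2 p) - w 2 p * v 0 p * w' 0 p) * h200 +
    (-(v 0 p * w 1 p * w' 2 p) - w 2 p * v 0 p * w' 1 p) * h201 +
    (-(v 0 p * w 2 p * w' 2 p) - w 2 p * v 0 p * w' 2 p) * h202 +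
    (-(v 0 p * w 3 p * w' 2 p) - w 2 p * v 0 p * w' 3 p) * h203 +
    (-(v 1 p * w 0 p * w' 2 p) - w 2 p * v 1 p * w' 0 p) * h210 +
    (-(v 1 p * w 1 p * w' 2 p) - w 2 p * v 1 p * w' 1 p) * h211 +
    (-(v 1 p * w 2 p * w' 2 p) - w 2 p * v 1 p * w' 2 p) * h212 +
    (-(v 1 p * w 3 p * w' 2 p) - w 2 p * v 1 p * w' 3 p) * h213 +
    (-(v 2 p * w 0 p * w' 2 p) - w 2 p * v 2 p * w' 0 p) * h220 +
    (-(v 2 p * w 1 p * w' 2 p) - w 2 p * v 2 p * w' 1 p) * h221 +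
    (-(v 2 p * w 2 p * w' 2 p) - w 2 p * v 2 p * w' 2 p) * h222 +
    (-(v 2 p * w 3 p * w' 2 p) - w 2 p * v 2 p * w' 3 p) * h223 +
    (-(v 3 p * w 0 p * w' 2 p) - w 2 p * v 3 p * w' 0 p) * h230 +
    (-(v 3 p * w 1 p * w' 2 p) - w 2 p * v 3 p * w' 1 p) * h231 +
    (-(v 3 p * w 2 p * w' 2 p) - w 2 p * v 3 p * w' 2 p) * h232 +
    (-(v 3 p * w 3 p * w' 2 p) - w 2 p * v 3 p * w' 3 p) * h233 +
    (-(v 0 p * w 0 p * w' 3 p) - w 3 p * v 0 p * w' 0 p) * h300 +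
    (-(v 0 p * w 1 p * w' 3 p) - w 3 p * v 0 p * w' 1 p) * h301 +
    (-(v 0 p * w 2 p * w' 3 p) - w 3 p * v 0 p * w' 2 p) * h302 +
    (-(v 0 p * w 3 p * w' 3 p) - w 3 p * v 0 p * w' 3 p) * h303 +
    (-(v 1 p * w 0 p * w' 3 p) - w 3 p * v 1 p * w' 0 p) * h310 +
    (-(v 1 p * w 1 p * w' 3 p) - w 3 p * v 1 p * w' 1 p) * h311 +
    (-(v 1 p * w 2 p * w' 3 p) - w 3 p * v 1 p * w' 2 p) * h312 +
    (-(v 1 p * w 3 p * w' 3 p) - w 3 p * v 1 p * w' 3 p) * h313 +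
    (-(v 2 p * w 0 p * w' 3 p) - w 3 p * v 2 p * w' 0 p) * h320 +
    (-(v 2 p * w 1 p * w' 3 p) - w 3 p * v 2 p * w' 1 p) * h321 +
    (-(v 2 p * w 2 p * w' 3 p) - w 3 p * v 2 p * w' 2 p) * h322 +
    (-(v 2 p * w 3 p * w' 3 p) - w 3 p * v 2 p * w' 3 p) * h323 +
    (-(v 3 p * w 0 p * w' 3 p) - w 3 p * v 3 p * w' 0 p) * h330 +
    (-(v 3 p * w 1 p * w' 3 p) - w 3 p * v 3 p * w' 1 p) * h331 +
    (-(v 3 p * w 2 p * w' 3 p) - w 3 p * v 3 p * w' 2 p) * h332 +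
    (-(v 3 p * w 3 p * w' 3 p) - w 3 p * v 3 p * w' 3 p) * h333

end FFE
namespace FFE

set_option maxHeartbeats 4000000 in
lemma dOne_flat (g : Lorentzian) {x : Vec} (hx : ∀ μ, Smooth (x μ)) (v w : Vec) (p : Pt) :
    dOne (g.flat x) v w p = g.inner (g.nabla v x) w p - g.inner (g.nabla w x) v p := by
  simp only [dOne, Finset.sum_apply, Pi.mul_apply, Pi.sub_apply]
  simp only [pd_flat g hx]
  simp only [Lorentzian.inner, Lorentzian.nabla, Finset.sum_apply, Pi.mul_apply, Pi.add_apply]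
  have h000 := lowered g p 0 0 0
  have h001 := lowered g p 0 0 1
  have h002 := lowered g p 0 0 2
  have h003 := lowered g p 0 0 3
  have h010 := lowered g p 0 1 0
  have h011 := lowered g p 0 1 1
  have h012 := lowered g p 0 1 2
  have h013 := lowered g p 0 1 3
  have h020 := lowered g p 0 2 0
  have h021 := lowered g p 0 2 1
  have h022 := lowered g p 0 2 2
  have h023 := lowered g p 0 2 3
  have h030 := lowered g p 0 3 0
  have h031 := lowered g p 0 3 1
  have h032 := lowered g p 0 3 2
  have h033 := lowered g p 0 3 3
  have h100 := lowered g p 1 0 0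
  have h101 := lowered g p 1 0 1
  have h102 := lowered g p 1 0 2
  have h103 := lowered g p 1 0 3
  have h110 := lowered g p 1 1 0
  have h111 := lowered g p 1 1 1
  have h112 := lowered g p 1 1 2
  have h113 := lowered g p 1 1 3
  have h120 := lowered g p 1 2 0
  have h121 := lowered g p 1 2 1
  have h122 := lowered g p 1 2 2
  have h123 := lowered g p 1 2 3
  have h130 := lowered g p 1 3 0
  have h131 := lowered g p 1 3 1
  have h132 := lowered g p 1 3 2
  have h133 := lowered g p 1 3 3
  have h200 := lowered g p 2 0 0
  have h201 := lowered g p 2 0 1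
  have h202 := lowered g p 2 0 2
  have h203 := lowered g p 2 0 3
  have h210 := lowered g p 2 1 0
  have h211 := lowered g p 2 1 1
  have h212 := lowered g p 2 1 2
  have h213 := lowered g p 2 1 3
  have h220 := lowered g p 2 2 0
  have h221 := lowered g p 2 2 1
  have h222 := lowered g p 2 2 2
  have h223 := lowered g p 2 2 3
  have h230 := lowered g p 2 3 0
  have h231 := lowered g p 2 3 1
  have h232 := lowered g p 2 3 2
  have h233 := lowered g p 2 3 3
  have h300 := lowered g p 3 0 0
  have h301 := lowered g p 3 0 1
  have h302 := lowered g p 3 0 2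
  have h303 := lowered g p 3 0 3
  have h310 := lowered g p 3 1 0
  have h311 := lowered g p 3 1 1
  have h312 := lowered g p 3 1 2
  have h313 := lowered g p 3 1 3
  have h320 := lowered g p 3 2 0
  have h321 := lowered g p 3 2 1
  have h322 := lowered g p 3 2 2
  have h323 := lowered g p 3 2 3
  have h330 := lowered g p 3 3 0
  have h331 := lowered g p 3 3 1
  have h332 := lowered g p 3 3 2
  have h333 := lowered g p 3 3 3
  simp only [Fin.sum_univ_four, g.symm_gdown 1 0, g.symm_gdown 2 0, g.symm_gdown 2 1,
    g.symm_gdown 3 0, g.symm_gdown 3 1, g.symm_gdown 3 2] at h000 h001 h002 h003 h010 h011 h012 h013 h020 h021 h022 h023 h030 h031 h032 h033 h100 h101 h102 h103 h110 h111 h112 h113 h120 h121 h122 h123 h130 h131 h132 h133 h200 h201 h202 h203 h210 h211 h212 h213 h220 h221 h222 h223 h230 h231 h232 h233 h300 h301 h302 h303 h310 h311 h312 h313 h320 h321 h322 h323 h330 h331 h332 h333 ⊢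
  linear_combination (-(v 0 p * x 0 p * w 0 p) + w 0 p * x 0 p * v 0 p) * h000 +
    (-(v 0 p * x 1 p * w 0 p) + w 0 p * x 1 p * v 0 p) * h001 +
    (-(v 0 p * x 2 p * w 0 p) + w 0 p * x 2 p * v 0 p) * h002 +
    (-(v 0 p * x 3 p * w 0 p) + w 0 p * x 3 p * v 0 p) * h003 +
    (-(v 1 p * x 0 p * w 0 p) + w 1 p * x 0 p * v 0 p) * h010 +
    (-(v 1 p * x 1 p * w 0 p) + w 1 p * x 1 p * v 0 p) * h011 +
    (-(v 1 p * x 2 p * w 0 p) + w 1 p * x 2 p * v 0 p) * h012 +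
    (-(v 1 p * x 3 p * w 0 p) + w 1 p * x 3 p * v 0 p) * h013 +
    (-(v 2 p * x 0 p * w 0 p) + w 2 p * x 0 p * v 0 p) * h020 +
    (-(v 2 p * x 1 p * w 0 p) + w 2 p * x 1 p * v 0 p) * h021 +
    (-(v 2 p * x 2 p * w 0 p) + w 2 p * x 2 p * v 0 p) * h022 +
    (-(v 2 p * x 3 p * w 0 p) + w 2 p * x 3 p * v 0 p) * h023 +
    (-(v 3 p * x 0 p * w 0 p) + w 3 p * x 0 p * v 0 p) * h030 +
    (-(v 3 p * x 1 p * w 0 p) + w 3 p * x 1 p * v 0 p) * h031 +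
    (-(v 3 p * x 2 p * w 0 p) + w 3 p * x 2 p * v 0 p) * h032 +
    (-(v 3 p * x 3 p * w 0 p) + w 3 p * x 3 p * v 0 p) * h033 +
    (-(v 0 p * x 0 p * w 1 p) + w 0 p * x 0 p * v 1 p) * h100 +
    (-(v 0 p * x 1 p * w 1 p) + w 0 p * x 1 p * v 1 p) * h101 +
    (-(v 0 p * x 2 p * w 1 p) + w 0 p * x 2 p * v 1 p) * h102 +
    (-(v 0 p * x 3 p * w 1 p) + w 0 p * x 3 p * v 1 p) * h103 +
    (-(v 1 p * x 0 p * w 1 p) + w 1 p * x 0 p * v 1 p) * h110 +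
    (-(v 1 p * x 1 p * w 1 p) + w 1 p * x 1 p * v 1 p) * h111 +
    (-(v 1 p * x 2 p * w 1 p) + w 1 p * x 2 p * v 1 p) * h112 +
    (-(v 1 p * x 3 p * w 1 p) + w 1 p * x 3 p * v 1 p) * h113 +
    (-(v 2 p * x 0 p * w 1 p) + w 2 p * x 0 p * v 1 p) * h120 +
    (-(v 2 p * x 1 p * w 1 p) + w 2 p * x 1 p * v 1 p) * h121 +
    (-(v 2 p * x 2 p * w 1 p) + w 2 p * x 2 p * v 1 p) * h122 +
    (-(v 2 p * x 3 p * w 1 p) + w 2 p * x 3 p * v 1 p) * h123 +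
    (-(v 3 p * x 0 p * w 1 p) + w 3 p * x 0 p * v 1 p) * h130 +
    (-(v 3 p * x 1 p * w 1 p) + w 3 p * x 1 p * v 1 p) * h131 +
    (-(v 3 p * x 2 p * w 1 p) + w 3 p * x 2 p * v 1 p) * h132 +
    (-(v 3 p * x 3 p * w 1 p) + w 3 p * x 3 p * v 1 p) * h133 +
    (-(v 0 p * x 0 p * w 2 p) + w 0 p * x 0 p * v 2 p) * h200 +
    (-(v 0 p * x 1 p * w 2 p) + w 0 p * x 1 p * v 2 p) * h201 +
    (-(v 0 p * x 2 p * w 2 p) + w 0 p * x 2 p * v 2 p) * h202 +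
    (-(v 0 p * x 3 p * w 2 p) + w 0 p * x 3 p * v 2 p) * h203 +
    (-(v 1 p * x 0 p * w 2 p) + w 1 p * x 0 p * v 2 p) * h210 +
    (-(v 1 p * x 1 p * w 2 p) + w 1 p * x 1 p * v 2 p) * h211 +
    (-(v 1 p * x 2 p * w 2 p) + w 1 p * x 2 p * v 2 p) * h212 +
    (-(v 1 p * x 3 p * w 2 p) + w 1 p * x 3 p * v 2 p) * h213 +
    (-(v 2 p * x 0 p * w 2 p) + w 2 p * x 0 p * v 2 p) * h220 +
    (-(v 2 p * x 1 p * w 2 p) + w 2 p * x 1 p * v 2 p) * h221 +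
    (-(v 2 p * x 2 p * w 2 p) + w 2 p * x 2 p * v 2 p) * h222 +
    (-(v 2 p * x 3 p * w 2 p) + w 2 p * x 3 p * v 2 p) * h223 +
    (-(v 3 p * x 0 p * w 2 p) + w 3 p * x 0 p * v 2 p) * h230 +
    (-(v 3 p * x 1 p * w 2 p) + w 3 p * x 1 p * v 2 p) * h231 +
    (-(v 3 p * x 2 p * w 2 p) + w 3 p * x 2 p * v 2 p) * h232 +
    (-(v 3 p * x 3 p * w 2 p) + w 3 p * x 3 p * v 2 p) * h233 +
    (-(v 0 p * x 0 p * w 3 p) + w 0 p * x 0 p * v 3 p) * h300 +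
    (-(v 0 p * x 1 p * w 3 p) + w 0 p * x 1 p * v 3 p) * h301 +
    (-(v 0 p * x 2 p * w 3 p) + w 0 p * x 2 p * v 3 p) * h302 +
    (-(v 0 p * x 3 p * w 3 p) + w 0 p * x 3 p * v 3 p) * h303 +
    (-(v 1 p * x 0 p * w 3 p) + w 1 p * x 0 p * v 3 p) * h310 +
    (-(v 1 p * x 1 p * w 3 p) + w 1 p * x 1 p * v 3 p) * h311 +
    (-(v 1 p * x 2 p * w 3 p) + w 1 p * x 2 p * v 3 p) * h312 +
    (-(v 1 p * x 3 p * w 3 p) + w 1 p * x 3 p * v 3 p) * h313 +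
    (-(v 2 p * x 0 p * w 3 p) + w 2 p * x 0 p * v 3 p) * h320 +
    (-(v 2 p * x 1 p * w 3 p) + w 2 p * x 1 p * v 3 p) * h321 +
    (-(v 2 p * x 2 p * w 3 p) + w 2 p * x 2 p * v 3 p) * h322 +
    (-(v 2 p * x 3 p * w 3 p) + w 2 p * x 3 p * v 3 p) * h323 +
    (-(v 3 p * x 0 p * w 3 p) + w 3 p * x 0 p * v 3 p) * h330 +
    (-(v 3 p * x 1 p * w 3 p) + w 3 p * x 1 p * v 3 p) * h331 +
    (-(v 3 p * x 2 p * w 3 p) + w 3 p * x 2 p * v 3 p) * h332 +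
    (-(v 3 p * x 3 p * w 3 p) + w 3 p * x 3 p * v 3 p) * h333

end FFE
namespace FFE

lemma key (g : Lorentzian) {l x : Vec} (hl : ∀ μ, Smooth (l μ)) (hx : ∀ μ, Smooth (x μ))
    (hunit : g.inner x x = 1) (horth : g.inner l x = 0) :
    dOne (g.flat x) l x = g.inner (g.nabla x l) x := by
  funext p
  rw [dOne_flat g hx l x p]
  have c1 := compat g l hx hx p
  have c2 := compat g x (w := x) (w' := l) hx hl p
  rw [hunit] at c1
  have hxl : g.inner x l = 0 := by rw [inner_symm]; exact horth
  rw [hxl] at c2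
  have e1 : act l (1 : Sc) p = 0 := by
    simp [act, Finset.sum_apply, Pi.mul_apply, pd_one_apply]
  have e2 : act x (0 : Sc) p = 0 := by
    simp [act, Finset.sum_apply, Pi.mul_apply, pd_zero_apply]
  have s1 := congrFun (inner_symm g x (g.nabla l x)) p
  have s2 := congrFun (inner_symm g x (g.nabla x l)) p
  rw [e1] at c1
  rw [e2] at c2
  linarith [c1, c2, s1, s2]

end FFE

/-- For a null foliation adapted frame `(s, l, α♯, n)`:
`ds♭(l,s) = g(∇_s l, s)` and `dα(l,α♯) = g(∇_{α♯} l, α♯)`; consequently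
`dα(l,α♯) = ds♭(l,s)` holds iff `ℱ` admits an equipartition of null mean curvature
with respect to `l`, i.e. `θ = g(∇_s l, s)` where
`θ = ½[g(∇_s l, s) + g(∇_{α♯} l, α♯)]`. -/
theorem FFE.equipartition_iff (g : Lorentzian) (s l a n : Vec)
    (hframe : Frame g s l a n) :
    dOne (g.flat s) l s = g.inner (g.nabla s l) s ∧
    dOne (g.flat a) l a = g.inner (g.nabla a l) a ∧
    (dOne (g.flat a) l a = dOne (g.flat s) l s ↔ Equipartition g l s a) := by
  have h1 := FFE.key g hframe.smooth_l hframe.smooth_s hframe.s_unit hframe.l_s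
  have h2 := FFE.key g hframe.smooth_l hframe.smooth_a hframe.a_unit hframe.l_a
  refine ⟨h1, h2, ?_⟩
  rw [h1, h2, FFE.Equipartition, FFE.theta]
  constructor
  · intro h
    funext p
    have := congrFun h p
    simp only [Pi.mul_apply, Pi.add_apply, Pi.div_apply, Pi.one_apply, Pi.ofNat_apply] at *
    linarith
  · intro h
    funext p
    have := congrFun h p
    simp only [Pi.mul_apply, Pi.add_apply, Pi.div_apply, Pi.one_apply, Pi.ofNat_apply] at *
    linarith
end
end

section
/- In a null foliation adapted chart with g³³ ≠ 0, choose l = M (the vector field with M^r = g^{r3}g^{34} − g^{33}g^{r4}) and α = −(g³³)^{−1/2} dx³, so that κ = (g³³)^{−1/2}. Then M(ln|κ|) = dα(M, α♯); consequently the condition dM♭(n,M) + dα(M,α♯) + ds♭(M,s) = 0 (equivalently ∇_μ M^μ = 0) holds if and only if M(ln|κ|) + dM♭(n,M) + ds♭(M,s) = 0. -/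
noncomputable section

/-- The 1-form `α = −(g³³)^{−1/2} dx³` (coordinate `x³` has index `2`). -/
def FFE.alphaM (g : FFE.Lorentzian) : FFE.Cov := fun μ => fun p =>
  if μ = 2 then -1 / Real.sqrt (g.ginv 2 2 p) else 0

namespace FFE

lemma pd_apply_hasFDerivAt {f : Sc} {D : Pt →L[ℝ] ℝ} {p : Pt} (hf : HasFDerivAt f D p)
    (i : Fin 4) : pd i f p = D (Pi.single i 1) := by
  rw [pd, hf.fderiv]

lemma smooth_hasFDerivAt {h : Sc} (hh : Smooth h) (p : Pt) :
    HasFDerivAt h (fderiv ℝ h p) p :=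
  ((hh.differentiable (by simp)) p).hasFDerivAt

lemma pd_neg_inv_sqrt {h : Sc} (hh : Smooth h) (i : Fin 4) (p : Pt) (hp : 0 < h p) :
    pd i (fun q => -1 / Real.sqrt (h q)) p = pd i h p / (2 * Real.sqrt (h p) ^ 3) := by
  have hd := smooth_hasFDerivAt hh p
  have hS : 0 < Real.sqrt (h p) := Real.sqrt_pos.mpr hp
  have hs := Real.hasDerivAt_sqrt hp.ne'
  have hi := hs.inv hS.ne'
  have hn := hi.const_mul (-1 : ℝ)
  have hfun : (fun y : ℝ => -1 * (Real.sqrt y)⁻¹) = fun y : ℝ => -1 / Real.sqrt y := by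
    funext y; ring
  simp only [Pi.inv_apply] at hn
  rw [hfun] at hn
  have hF := hn.comp_hasFDerivAt p hd
  rw [Function.comp_def] at hF
  rw [pd_apply_hasFDerivAt hF i, ContinuousLinearMap.smul_apply]
  have : pd i h p = (fderiv ℝ h p) (Pi.single i 1) := rfl
  rw [← this]
  have hsq : Real.sqrt (h p) ^ 2 = h p := Real.sq_sqrt hp.le
  have h3 : Real.sqrt (h p) ^ 3 = h p * Real.sqrt (h p) := by
    rw [pow_succ, hsq]
  rw [h3, hsq]
  simp only [smul_eq_mul]
  field_simp

lemma pd_neg_half_log {h : Sc} (hh : Smooth h) (i : Fin 4) (p : Pt) (hp : 0 < h p) :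
    pd i (fun q => -(1 / 2) * Real.log (h q)) p = -(pd i h p / (2 * h p)) := by
  have hd := smooth_hasFDerivAt hh p
  have hl := (Real.hasDerivAt_log hp.ne').const_mul (-(1 / 2) : ℝ)
  have hF := hl.comp_hasFDerivAt p hd
  rw [Function.comp_def] at hF
  rw [pd_apply_hasFDerivAt hF i, ContinuousLinearMap.smul_apply]
  have : pd i h p = (fderiv ℝ h p) (Pi.single i 1) := rfl
  rw [← this]
  simp only [smul_eq_mul]
  field_simp

lemma down_up (g : Lorentzian) (μ ρ : Fin 4) (p : Pt) :
    (∑ ν, g.gdown μ ν p * g.ginv ν ρ p) = if μ = ρ then 1 else 0 := by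
  have h := g.inv_gdown ρ μ p
  have : (∑ ν, g.gdown μ ν p * g.ginv ν ρ p) = ∑ ν, g.ginv ρ ν p * g.gdown ν μ p := by
    apply Finset.sum_congr rfl
    intro ν _
    rw [g.symm_gdown μ ν, g.symm_ginv ν ρ]; ring
  rw [this, h]
  by_cases hμρ : μ = ρ <;> simp [hμρ, eq_comm]

lemma flatM_apply (g : Lorentzian) (μ : Fin 4) (p : Pt) :
    g.flat (Mvec g) μ p =
      g.ginv 2 3 p * (if μ = 2 then 1 else 0) - g.ginv 2 2 p * (if μ = 3 then 1 else 0) := by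
  have h2 := down_up g μ 2 p
  have h3 := down_up g μ 3 p
  have expand : g.flat (Mvec g) μ p =
      ∑ ν, g.gdown μ ν p * (g.ginv ν 2 p * g.ginv 2 3 p - g.ginv 2 2 p * g.ginv ν 3 p) := by
    simp [Lorentzian.flat, Mvec, Finset.sum_apply]
  rw [expand]
  have : (∑ ν, g.gdown μ ν p * (g.ginv ν 2 p * g.ginv 2 3 p - g.ginv 2 2 p * g.ginv ν 3 p)) =
      g.ginv 2 3 p * (∑ ν, g.gdown μ ν p * g.ginv ν 2 p) -
        g.ginv 2 2 p * (∑ ν, g.gdown μ ν p * g.ginv ν 3 p) := by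
    rw [Finset.mul_sum, Finset.mul_sum, ← Finset.sum_sub_distrib]
    apply Finset.sum_congr rfl
    intro ν _; ring
  rw [this, h2, h3]

lemma alphaM_two (g : Lorentzian) :
    alphaM g 2 = fun p => -1 / Real.sqrt (g.ginv 2 2 p) := by
  funext p; simp [alphaM]

lemma alphaM_ne_two (g : Lorentzian) (ν : Fin 4) (hν : ν ≠ 2) :
    alphaM g ν = fun _ => 0 := by
  funext p; simp [alphaM, hν]

lemma pd_const_fun (i : Fin 4) (c : ℝ) : pd i (fun _ : Pt => c) = fun _ => 0 := by
  funext p; simp [pd]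

lemma sharp_alphaM (g : Lorentzian) (ν : Fin 4) (p : Pt) :
    g.sharp (alphaM g) ν p = g.ginv ν 2 p * (-1 / Real.sqrt (g.ginv 2 2 p)) := by
  simp only [Lorentzian.sharp, Finset.sum_apply, Pi.mul_apply]
  rw [Fin.sum_univ_four]
  simp [alphaM]

lemma Mvec_two (g : Lorentzian) (p : Pt) : Mvec g 2 p = 0 := by
  simp only [Mvec, Pi.sub_apply, Pi.mul_apply]; ring

end FFE

/-- In a null foliation adapted chart with `g³³ ≠ 0` (here
`g³³ > 0`), choose `l = M` and `α = −(g³³)^{−1/2} dx³`, so that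
`κ = (g³³)^{−1/2}`.  Then `M(ln|κ|) = dα(M,α♯)`; consequently
`dM♭(n,M) + dα(M,α♯) + ds♭(M,s) = 0` (equivalently `∇_μ M^μ = 0`) holds iff
`M(ln|κ|) + dM♭(n,M) + ds♭(M,s) = 0`. -/
theorem FFE.kappaM (g : Lorentzian) (hdeg : g.NullAdapted)
    (hg33 : ∀ p, 0 < g.ginv 2 2 p)
    (s n : Vec) (hframe : Frame g s (Mvec g) (g.sharp (alphaM g)) n)
    (hs2 : s 2 = 0) (hs3 : s 3 = 0)
    (κ : Sc)
    (hκ : κ = (alphaM g 2 * g.flat (Mvec g) 3 - alphaM g 3 * g.flat (Mvec g) 2)⁻¹) :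
    (κ = fun p => 1 / Real.sqrt (g.ginv 2 2 p)) ∧
    act (Mvec g) (logabs κ) = dOne (alphaM g) (Mvec g) (g.sharp (alphaM g)) ∧
    ((dOne (g.flat (Mvec g)) n (Mvec g) +
        dOne (alphaM g) (Mvec g) (g.sharp (alphaM g)) +
        dOne (g.flat s) (Mvec g) s = 0) ↔
      (act (Mvec g) (logabs κ) + dOne (g.flat (Mvec g)) n (Mvec g) +
        dOne (g.flat s) (Mvec g) s = 0)) := by
  have hsm : Smooth (g.ginv 2 2) := g.smooth_ginv 2 2
  have hκ1 : κ = fun p => 1 / Real.sqrt (g.ginv 2 2 p) := by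
    funext p
    rw [hκ]
    simp only [Pi.inv_apply, Pi.sub_apply, Pi.mul_apply]
    rw [flatM_apply g 3 p, flatM_apply g 2 p]
    have hG := hg33 p
    simp only [alphaM]
    simp
    have hS := Real.sqrt_pos.mpr hG
    have hsq := Real.mul_self_sqrt hG.le
    set S := Real.sqrt (g.ginv 2 2 p)
    rw [← hsq]
    field_simp
  have hMain : act (Mvec g) (logabs κ) = dOne (alphaM g) (Mvec g) (g.sharp (alphaM g)) := by
    funext p
    have hG := hg33 p
    set S := Real.sqrt (g.ginv 2 2 p) with hSdef
    have hS : 0 < S := Real.sqrt_pos.mpr hG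
    have hsq : g.ginv 2 2 p = S ^ 2 := (Real.sq_sqrt hG.le).symm
    -- log formula
    have hlog : logabs κ = fun q => -(1 / 2) * Real.log (g.ginv 2 2 q) := by
      funext q
      rw [hκ1]
      simp only [logabs]
      have hq := hg33 q
      have hSq : 0 < Real.sqrt (g.ginv 2 2 q) := Real.sqrt_pos.mpr hq
      rw [abs_of_pos (by positivity), one_div, Real.log_inv,
        Real.log_sqrt hq.le]
      ring
    -- pd of alphaM components
    have hpd : ∀ i ν : Fin 4, pd i (alphaM g ν) p =
        (if ν = 2 then pd i (g.ginv 2 2) p / (2 * S ^ 3) else 0) := by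
      intro i ν
      by_cases hν : ν = 2
      · subst hν
        rw [alphaM_two, pd_neg_inv_sqrt hsm i p hG]
        simp [hSdef]
      · rw [alphaM_ne_two g ν hν]
        simp [hν, pd_const_fun]
    -- LHS
    have hL : act (Mvec g) (logabs κ) p =
        ∑ i, Mvec g i p * (-(pd i (g.ginv 2 2) p / (2 * g.ginv 2 2 p))) := by
      simp only [act, Finset.sum_apply, Pi.mul_apply]
      apply Finset.sum_congr rfl
      intro i _
      rw [hlog, pd_neg_half_log hsm i p hG]
    -- RHS
    have hR : dOne (alphaM g) (Mvec g) (g.sharp (alphaM g)) p =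
        ∑ μ, ∑ ν, ((if ν = 2 then pd μ (g.ginv 2 2) p / (2 * S ^ 3) else 0) -
          (if μ = 2 then pd ν (g.ginv 2 2) p / (2 * S ^ 3) else 0)) *
          Mvec g μ p * (g.ginv ν 2 p * (-1 / S)) := by
      simp only [dOne, Finset.sum_apply, Pi.mul_apply, Pi.sub_apply]
      apply Finset.sum_congr rfl
      intro μ _
      apply Finset.sum_congr rfl
      intro ν _
      rw [hpd, hpd, sharp_alphaM, hSdef]
    rw [hL, hR]
    rw [Fin.sum_univ_four]
    rw [Fin.sum_univ_four, Fin.sum_univ_four, Fin.sum_univ_four, Fin.sum_univ_four,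
      Fin.sum_univ_four]
    simp [Mvec_two]
    rw [hsq]
    field_simp
  refine ⟨hκ1, hMain, ?_⟩
  rw [hMain]
  constructor <;> intro h
  · rw [show dOne (alphaM g) (Mvec g) (g.sharp (alphaM g)) +
        dOne (g.flat (Mvec g)) n (Mvec g) + dOne (g.flat s) (Mvec g) s =
        dOne (g.flat (Mvec g)) n (Mvec g) +
        dOne (alphaM g) (Mvec g) (g.sharp (alphaM g)) +
        dOne (g.flat s) (Mvec g) s from by ring]
    exact h
  · rw [show dOne (g.flat (Mvec g)) n (Mvec g) +
        dOne (alphaM g) (Mvec g) (g.sharp (alphaM g)) +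
        dOne (g.flat s) (Mvec g) s =
        dOne (alphaM g) (Mvec g) (g.sharp (alphaM g)) +
        dOne (g.flat (Mvec g)) n (Mvec g) +
        dOne (g.flat s) (Mvec g) s from by ring]
    exact h
end
end
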